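/- Let X₁ = −(y+w)∂_x + (x+z)∂_y + (y+w)∂_z − (x+z)∂_w and X₂ = −(y−w)∂_x + (x+z)∂_y + (y−w)∂_z + (x+z)∂_w be derivations on ℝ[x,y,z,w]. Then the polynomials e = x + z and f = w² − y² − 2x(x+z) satisfy X₁(e) = X₂(e) = 0 and X₁(f) = X₂(f) = 0; moreover every polynomial in the subalgebra generated by e and f is annihilated by both X₁ and X₂. -/

import Mathlib

open MvPolynomial

/-- The derivation `X₁ = −(y+w)∂_x + (x+z)∂_y + (y+w)∂_z − (x+z)∂_w` on `ℝ[x,y,z,w]`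
(variables `x, y, z, w` indexed `0, 1, 2, 3`). -/
noncomputable def X1der (p : MvPolynomial (Fin 4) ℝ) : MvPolynomial (Fin 4) ℝ :=
  -(X 1 + X 3) * pderiv 0 p + (X 0 + X 2) * pderiv 1 p +
    (X 1 + X 3) * pderiv 2 p - (X 0 + X 2) * pderiv 3 p

/-- The derivation `X₂ = −(y−w)∂_x + (x+z)∂_y + (y−w)∂_z + (x+z)∂_w` on `ℝ[x,y,z,w]`. -/
noncomputable def X2der (p : MvPolynomial (Fin 4) ℝ) : MvPolynomial (Fin 4) ℝ :=
  -(X 1 - X 3) * pderiv 0 p + (X 0 + X 2) * pderiv 1 p +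
    (X 1 - X 3) * pderiv 2 p + (X 0 + X 2) * pderiv 3 p

lemma X1der_add (p q : MvPolynomial (Fin 4) ℝ) : X1der (p + q) = X1der p + X1der q := by
  simp only [X1der, map_add]; ring

lemma X2der_add (p q : MvPolynomial (Fin 4) ℝ) : X2der (p + q) = X2der p + X2der q := by
  simp only [X2der, map_add]; ring

lemma X1der_mul (p q : MvPolynomial (Fin 4) ℝ) :
    X1der (p * q) = X1der p * q + p * X1der q := by
  simp only [X1der, pderiv_mul]; ring

lemma X2der_mul (p q : MvPolynomial (Fin 4) ℝ) :
    X2der (p * q) = X2der p * q + p * X2der q := by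
  simp only [X2der, pderiv_mul]; ring

lemma X1der_C (r : ℝ) : X1der (C r) = 0 := by
  simp [X1der]

lemma X2der_C (r : ℝ) : X2der (C r) = 0 := by
  simp [X2der]

/-- The polynomials `e = x + z` and `f = w² − y² − 2x(x+z)` are joint invariants of the
derivations `X₁` and `X₂`, and so is every polynomial in the subalgebra they generate. -/
theorem joint_invariants_of_so22_nilpotents :
    X1der (X 0 + X 2) = 0 ∧ X2der (X 0 + X 2) = 0 ∧
    X1der (X 3 ^ 2 - X 1 ^ 2 - 2 * X 0 * (X 0 + X 2)) = 0 ∧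
    X2der (X 3 ^ 2 - X 1 ^ 2 - 2 * X 0 * (X 0 + X 2)) = 0 ∧
    ∀ p ∈ Algebra.adjoin ℝ
        ({X 0 + X 2, X 3 ^ 2 - X 1 ^ 2 - 2 * X 0 * (X 0 + X 2)} :
          Set (MvPolynomial (Fin 4) ℝ)),
      X1der p = 0 ∧ X2der p = 0 := by
  have hfeq : (X 3 ^ 2 - X 1 ^ 2 - 2 * X 0 * (X 0 + X 2) : MvPolynomial (Fin 4) ℝ)
      = X 3 * X 3 - X 1 * X 1 - (X 0 + X 0) * (X 0 + X 2) := by ring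
  have h1e : X1der (X 0 + X 2) = 0 := by
    simp only [X1der, map_add, pderiv_X]
    simp (config := { decide := true }) [Pi.single_apply]
  have h2e : X2der (X 0 + X 2) = 0 := by
    simp only [X2der, map_add, pderiv_X]
    simp (config := { decide := true }) [Pi.single_apply]
  have h1f : X1der (X 3 ^ 2 - X 1 ^ 2 - 2 * X 0 * (X 0 + X 2)) = 0 := by
    rw [hfeq]
    simp only [X1der, map_sub, map_add, pderiv_mul, pderiv_X]
    simp (config := { decide := true }) [Pi.single_apply]
    ring
  have h2f : X2der (X 3 ^ 2 - X 1 ^ 2 - 2 * X 0 * (X 0 + X 2)) = 0 := by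
    rw [hfeq]
    simp only [X2der, map_sub, map_add, pderiv_mul, pderiv_X]
    simp (config := { decide := true }) [Pi.single_apply]
    ring
  refine ⟨h1e, h2e, h1f, h2f, ?_⟩
  intro p hp
  induction hp using Algebra.adjoin_induction with
  | mem x hx =>
    rcases hx with h | h <;> subst h
    · exact ⟨h1e, h2e⟩
    · exact ⟨h1f, h2f⟩
  | algebraMap r =>
    exact ⟨X1der_C r, X2der_C r⟩
  | add x y _ _ hx hy =>
    exact ⟨by rw [X1der_add, hx.1, hy.1, add_zero], by rw [X2der_add, hx.2, hy.2, add_zero]⟩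
  | mul x y _ _ hx hy =>
    exact ⟨by rw [X1der_mul, hx.1, hy.1]; ring, by rw [X2der_mul, hx.2, hy.2]; ring⟩
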